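/- Let (M,d) be a compact metric space and h : M × M × (0,∞) → ℝ a continuous function satisfying the semigroup identity h(x,z,t+s) = inf_{y ∈ M} (h(x,y,t) + h(y,z,s)) for all x, z ∈ M and s, t > 0. Suppose there exist c ∈ ℝ and a bounded function u : M → ℝ such that u(x) = inf_{y ∈ M} (u(y) + h(y,x,t)) + c t for every x ∈ M and every t > 0. Then for every δ > 0 there exists C_δ > 0 such that |h(x,y,t) + c t| ≤ C_δ for all x, y ∈ M and all t ≥ δ. -/

import Mathlib

open Set

/-- If there is a bounded weak KAM solution `u` (a fixed point of the
Lax–Oleinik semigroup up to `c·t`), then `h(x,y,t) + c t` is uniformly bounded for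
`t ≥ δ`. -/
theorem stmt_8 {M : Type*} [MetricSpace M] [CompactSpace M] [Nonempty M]
    (h : M → M → ℝ → ℝ)
    (hcont : ContinuousOn (fun p : M × M × ℝ => h p.1 p.2.1 p.2.2)
      ((univ : Set M) ×ˢ (univ : Set M) ×ˢ Ioi (0:ℝ)))
    (hsemi : ∀ x z : M, ∀ s t : ℝ, 0 < s → 0 < t →
      h x z (t + s) = ⨅ y : M, (h x y t + h y z s))
    (c : ℝ) (u : M → ℝ) (hubdd : ∃ B, ∀ x, |u x| ≤ B)
    (hu : ∀ x : M, ∀ t > (0:ℝ), u x = (⨅ y : M, (u y + h y x t)) + c * t) :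
    ∀ δ > (0:ℝ), ∃ C > (0:ℝ), ∀ t ≥ δ, ∀ x y : M, |h x y t + c * t| ≤ C := by
  intro δ hδ
  obtain ⟨B, hB⟩ := hubdd
  have hB0 : 0 ≤ B := le_trans (abs_nonneg _) (hB (Classical.arbitrary M))
  -- continuity of the pair map for each fixed time
  have cont : ∀ t : ℝ, 0 < t → Continuous (fun p : M × M => h p.1 p.2 t) := by
    intro t ht
    rw [← continuousOn_univ]
    have heq : (fun p : M × M => h p.1 p.2 t)
        = (fun q : M × M × ℝ => h q.1 q.2.1 q.2.2) ∘ (fun p : M × M => (p.1, p.2, t)) := rfl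
    rw [heq]
    apply hcont.comp (Continuous.continuousOn (by continuity))
    intro p _
    exact ⟨mem_univ _, ⟨mem_univ _, ht⟩⟩
  have cont1 : ∀ (a : M) (t : ℝ), 0 < t → Continuous (fun w : M => h a w t) :=
    fun a t ht => (cont t ht).comp (continuous_const.prodMk continuous_id)
  have cont2 : ∀ (b : M) (t : ℝ), 0 < t → Continuous (fun w : M => h w b t) :=
    fun b t ht => (cont t ht).comp (continuous_id.prodMk continuous_const)
  -- bddBelow of the Lax-Oleinik range
  have hbdd : ∀ (x : M) (t : ℝ), 0 < t → BddBelow (range fun y : M => u y + h y x t) := by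
    intro x t ht
    obtain ⟨m, hm⟩ := (isCompact_range (cont2 x t ht)).bddBelow
    refine ⟨-B + m, ?_⟩
    rintro v ⟨y, rfl⟩
    show -B + m ≤ u y + h y x t
    have h1 : -B ≤ u y := neg_le_of_abs_le (hB y)
    have h2 : m ≤ h y x t := hm (mem_range_self y)
    linarith
  -- upper bound for h at time δ/2
  obtain ⟨K, hK⟩ := (isCompact_range (cont (δ/2) (half_pos hδ))).bddAbove
  have hKb : ∀ x z : M, h x z (δ/2) ≤ K := fun x z => hK ⟨(x, z), rfl⟩
  refine ⟨2*B + |K| + |c| * δ + 1, by positivity, ?_⟩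
  intro t ht x y
  have ht0 : 0 < t := lt_of_lt_of_le hδ ht
  -- lower bound
  have hlow : -(2*B + |K| + |c| * δ + 1) ≤ h x y t + c * t := by
    have h1 : (⨅ z : M, (u z + h z y t)) ≤ u x + h x y t := ciInf_le (hbdd y t ht0) x
    have h2 := hu y t ht0
    have h3 : -B ≤ u y := neg_le_of_abs_le (hB y)
    have h4 : u x ≤ B := le_of_abs_le (hB x)
    have h5 : 0 ≤ |K| := abs_nonneg K
    have h6 : 0 ≤ |c| * δ := mul_nonneg (abs_nonneg c) hδ.le
    linarith
  -- upper bound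
  set s := t - δ/2 with hs
  have hs0 : 0 < s := by
    have : δ/2 < δ := half_lt_self hδ
    simp only [hs]; linarith
  have hinf := hu y s hs0
  have hlt : (⨅ z : M, (u z + h z y s)) < u y - c*s + 1 := by linarith
  obtain ⟨z, hz⟩ := exists_lt_of_ciInf_lt hlt
  have hsemi' := hsemi x y s (δ/2) hs0 (half_pos hδ)
  have ht' : δ/2 + s = t := by simp only [hs]; ring
  have bdd2 : BddBelow (range fun w : M => h x w (δ/2) + h w y s) :=
    (isCompact_range ((cont1 x (δ/2) (half_pos hδ)).add (cont2 y s hs0))).bddBelow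
  have hle : h x y t ≤ h x z (δ/2) + h z y s := by
    rw [← ht', hsemi']
    exact ciInf_le bdd2 z
  have h3 : -B ≤ u z := neg_le_of_abs_le (hB z)
  have h4 : u y ≤ B := le_of_abs_le (hB y)
  have hKK : K ≤ |K| := le_abs_self K
  have hcc : c * (δ/2) ≤ |c| * δ := by
    have h1 : c ≤ |c| := le_abs_self c
    have h2 : 0 ≤ |c| := abs_nonneg c
    nlinarith
  have hup : h x y t + c * t ≤ 2*B + |K| + |c| * δ + 1 := by
    have : c * t = c * s + c * (δ/2) := by rw [hs]; ring
    have hK1 := hKb x z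
    have h5 : h x y t + c * t ≤ K + (u y - u z - c*s + 1) + c * t := by linarith
    rw [this] at h5
    linarith
  exact abs_le.mpr ⟨hlow, hup⟩
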